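/- Let X_1, X_2, ... be i.i.d. with P(X_j = k) = 2^{-k-2} for integer k ≥ -1. For every fixed R ≥ 1 and all a_1,...,a_R ∈ {-1,0,1,...}, the conditional probability P(X_1=a_1,...,X_R=a_R | X_1+...+X_n = 0) converges, as n → ∞, to P(X_1=a_1,...,X_R=a_R). -/

import Mathlib

open MeasureTheory ProbabilityTheory Filter
open scoped ENNReal

namespace BridgeAux

noncomputable def p (k : ℤ) : ℝ≥0∞ := if -1 ≤ k then (2 : ℝ≥0∞)⁻¹ ^ (k + 2).toNat else 0

noncomputable def q (n : ℕ) (c : ℤ) : ℝ≥0∞ :=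
  if -(n : ℤ) ≤ c then
    ((c + 2 * (n : ℤ) - 1).toNat.choose (c + (n : ℤ)).toNat : ℝ≥0∞)
      * (2 : ℝ≥0∞)⁻¹ ^ (c + 2 * (n : ℤ)).toNat
  else 0

lemma q_zero (c : ℤ) : q 0 c = if c = 0 then 1 else 0 := by
  rcases eq_or_ne c 0 with rfl | hc
  · simp [q]
  · rcases lt_or_ge c 0 with h | h
    · simp [q, h.not_ge, hc]
    · have h1 : -(0:ℤ) ≤ c := by omega
      have h2 : (c + 2 * 0 - 1).toNat < (c + 0).toNat := by omega
      simp only [q, Nat.cast_zero, h1, if_true, hc, if_false]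
      rw [Nat.choose_eq_zero_of_lt h2]
      simp

lemma q_one (c : ℤ) : q 1 c = p c := by
  unfold q p
  rcases le_or_gt (-1 : ℤ) c with h | h
  · have h1 : -(1:ℤ) ≤ c := by omega
    have h2 : (c + 2 * 1 - 1).toNat = (c + 1).toNat := by omega
    have h3 : (c + 2 * 1).toNat = (c + 2).toNat := by omega
    simp only [Nat.cast_one, h1, if_true, h, h2, h3, Nat.choose_self]
    simp
  · have h1 : ¬ (-(1:ℤ) ≤ c) := by omega
    simp [h1, h.not_ge]

lemma nat_id (m N : ℕ) :
    ∑ j ∈ Finset.range (N + 1), (N + m - j).choose (N - j) = (N + m + 1).choose N := by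
  have h1 : ∀ j ∈ Finset.range (N + 1),
      (N + m - j).choose (N - j) = ((N - j) + m).choose m := by
    intro j hj
    rw [Finset.mem_range] at hj
    have e1 : N + m - j = (N - j) + m := by omega
    rw [e1, ← Nat.choose_symm (show m ≤ (N - j) + m by omega), Nat.add_sub_cancel]
  rw [Finset.sum_congr rfl h1]
  have h2 := Finset.sum_range_reflect (fun j => (j + m).choose m) (N + 1)
  simp only [Nat.add_sub_cancel] at h2
  rw [h2, Nat.sum_range_add_choose]
  have hNe : N + m + 1 - (m + 1) = N := by omega
  have h4 := Nat.choose_symm (n := N + m + 1) (k := m + 1) (by omega)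
  rw [hNe] at h4
  exact h4.symm

lemma conv (n : ℕ) (c : ℤ) : ∑' k : ℤ, p k * q n (c - k) = q (n + 1) c := by
  rcases lt_or_ge c (-(n : ℤ) - 1) with hc | hc
  · have h1 : ∀ k : ℤ, p k * q n (c - k) = 0 := by
      intro k
      by_cases hk : -1 ≤ k
      · have h2 : ¬ (-(n : ℤ) ≤ c - k) := by omega
        simp [q, h2]
      · simp [p, hk]
    rw [tsum_congr h1, tsum_zero]
    have h2 : ¬ (-((n : ℕ) + 1 : ℤ) ≤ c) := by omega
    simp only [q, Nat.cast_add, Nat.cast_one]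
    rw [if_neg (by push_cast; omega)]
  · cases n with
    | zero =>
      rw [tsum_eq_single c ?_]
      · have h0 : c - c = 0 := by omega
        rw [h0, q_zero, if_pos rfl, mul_one, q_one]
      · intro k hk
        rw [q_zero, if_neg (by omega), mul_zero]
    | succ m =>
      set n' : ℕ := m + 1 with hn'
      have hNnn : (0:ℤ) ≤ c + n' + 1 := by push_cast; omega
      set N : ℕ := (c + (n' : ℤ) + 1).toNat with hN
      have hNc : (N : ℤ) = c + n' + 1 := Int.toNat_of_nonneg hNnn
      rw [tsum_eq_sum (s := (Finset.range (N + 1)).map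
        (⟨fun j : ℕ => (j : ℤ) - 1, by
          have hi : Function.Injective fun j : ℕ => (j : ℤ) - 1 := fun x y h => by simpa using h
          exact hi⟩ : ℕ ↪ ℤ)) ?_]
      · rw [Finset.sum_map]
        simp only [Function.Embedding.coeFn_mk]
        have hterm : ∀ j ∈ Finset.range (N + 1),
            p ((j : ℤ) - 1) * q n' (c - ((j : ℤ) - 1))
              = ((N + m - j).choose (N - j) : ℝ≥0∞) * (2:ℝ≥0∞)⁻¹ ^ (N + n' + 1) := by
          intro j hj
          rw [Finset.mem_range] at hj
          have hj' : j ≤ N := by omega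
          have e1 : ((j : ℤ) - 1 + 2).toNat = j + 1 := by omega
          have hcond : -(n' : ℤ) ≤ c - ((j : ℤ) - 1) := by omega
          have e2 : (c - ((j:ℤ) - 1) + 2 * (n' : ℤ) - 1).toNat = N + m - j := by omega
          have e3 : (c - ((j:ℤ) - 1) + (n' : ℤ)).toNat = N - j := by omega
          have e4 : (c - ((j:ℤ) - 1) + 2 * (n' : ℤ)).toNat = N + n' - j := by omega
          rw [p, if_pos (by omega), q, if_pos hcond, e1, e2, e3, e4]
          rw [← mul_assoc, mul_comm ((2:ℝ≥0∞)⁻¹ ^ (j+1)), mul_assoc, ← pow_add]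
          congr 2
          omega
        rw [Finset.sum_congr rfl hterm, ← Finset.sum_mul, ← Nat.cast_sum]
        have := nat_id m N
        rw [this]
        rw [q, if_pos (by push_cast; omega)]
        rw [show (c + 2 * ((n' + 1 : ℕ) : ℤ) - 1).toNat = N + m + 1 from by omega,
            show (c + ((n' + 1 : ℕ) : ℤ)).toNat = N from by omega,
            show (c + 2 * ((n' + 1 : ℕ) : ℤ)).toNat = N + n' + 1 from by omega]
      · intro k hk
        simp only [Finset.mem_map, Finset.mem_range, Function.Embedding.coeFn_mk,
          not_exists, not_and] at hk
        by_cases hk1 : -1 ≤ k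
        · have hk2 : ¬ (k ≤ c + n') := by
            intro hle
            exact hk (k + 1).toNat (by omega) (by omega)
          have : ¬ (-(n' : ℤ) ≤ c - k) := by omega
          simp [q, this]
        · simp [p, hk1]

section Meas

variable {Ω : Type*} [MeasurableSpace Ω] (μ : Measure Ω) [IsProbabilityMeasure μ]
  (X : ℕ → Ω → ℤ)

lemma meas_sum_eq (hmeas : ∀ i, Measurable (X i))
    (hindep : iIndepFun X μ)
    (hlaw : ∀ i, ∀ k : ℤ, μ {ω | X i ω = k} = p k) :
    ∀ (s : Finset ℕ) (c : ℤ), μ {ω | ∑ i ∈ s, X i ω = c} = q s.card c := by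
  intro s
  induction s using Finset.cons_induction with
  | empty =>
    intro c
    rcases eq_or_ne c 0 with rfl | hc
    · simp [q_zero]
    · rw [Finset.card_empty, q_zero, if_neg hc]
      have he : {ω : Ω | ∑ i ∈ (∅ : Finset ℕ), X i ω = c} = ∅ := by
        ext ω; simp [Ne.symm hc]
      rw [he, measure_empty]
  | cons j t hj ih =>
    intro c
    have hT : Measurable fun ω => ∑ i ∈ t, X i ω :=
      Finset.measurable_sum t fun i _ => hmeas i
    have hIndep : IndepFun (X j) (fun ω => ∑ i ∈ t, X i ω) μ := by
      have h := (hindep.indepFun_finsetSum_of_notMem hmeas hj).symm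
      have he : (∑ i ∈ t, X i) = fun ω => ∑ i ∈ t, X i ω := by
        funext ω; simp [Finset.sum_apply]
      rwa [he] at h
    have hset : {ω | ∑ i ∈ Finset.cons j t hj, X i ω = c}
        = ⋃ k : ℤ, ((X j) ⁻¹' {k} ∩ (fun ω => ∑ i ∈ t, X i ω) ⁻¹' {c - k}) := by
      ext ω
      simp only [Finset.sum_cons, Set.mem_setOf_eq, Set.mem_iUnion, Set.mem_inter_iff,
        Set.mem_preimage, Set.mem_singleton_iff]
      constructor
      · intro h; exact ⟨X j ω, rfl, by omega⟩
      · rintro ⟨k, rfl, hk⟩; omega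
    rw [hset, measure_iUnion ?_ ?_]
    · have hterm : ∀ k : ℤ,
          μ ((X j) ⁻¹' {k} ∩ (fun ω => ∑ i ∈ t, X i ω) ⁻¹' {c - k})
            = p k * q t.card (c - k) := by
        intro k
        rw [hIndep.measure_inter_preimage_eq_mul _ _ (measurableSet_singleton k)
          (measurableSet_singleton (c - k))]
        congr 1
        · exact hlaw j k
        · exact ih (c - k)
      rw [tsum_congr hterm, conv, Finset.card_cons]
    · intro k l hkl
      simp only [Function.onFun, Set.disjoint_left]
      rintro ω ⟨h1, _⟩ ⟨h2, _⟩
      exact hkl (h1.symm.trans h2)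
    · intro k
      exact ((hmeas j) (measurableSet_singleton k)).inter (hT (measurableSet_singleton _))

lemma meas_prefix (hmeas : ∀ i, Measurable (X i))
    (hindep : iIndepFun X μ)
    (hlaw : ∀ i, ∀ k : ℤ, μ {ω | X i ω = k} = p k)
    (R n : ℕ) (hRn : R ≤ n) (a : Fin R → ℤ) (c : ℤ) :
    μ ({ω | ∀ i : Fin R, X (i : ℕ) ω = a i} ∩ {ω | ∑ i ∈ Finset.Ico R n, X i ω = c})
      = μ {ω | ∀ i : Fin R, X (i : ℕ) ω = a i} * q (n - R) c := by
  classical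
  set f : Ω → ((i : (Finset.range R : Finset ℕ)) → ℤ) := fun ω i => X i ω with hf
  set g : Ω → ((i : (Finset.Ico R n : Finset ℕ)) → ℤ) := fun ω i => X i ω with hg
  have hdisj : Disjoint (Finset.range R) (Finset.Ico R n) := by
    simp only [Finset.disjoint_left, Finset.mem_range, Finset.mem_Ico]
    omega
  have hfg : IndepFun f g μ := hindep.indepFun_finset _ _ hdisj hmeas
  set φ : ((i : (Finset.range R : Finset ℕ)) → ℤ) → (Fin R → ℤ) :=
    fun v i => v ⟨(i : ℕ), Finset.mem_range.2 i.isLt⟩ with hφ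
  set ψ : ((i : (Finset.Ico R n : Finset ℕ)) → ℤ) → ℤ := fun v => ∑ i, v i with hψ
  have hφm : Measurable φ := measurable_pi_lambda _ fun i => measurable_pi_apply _
  have hψm : Measurable ψ :=
    Finset.measurable_sum Finset.univ fun i _ => measurable_pi_apply _
  have hcomp : IndepFun (φ ∘ f) (ψ ∘ g) μ := hfg.comp hφm hψm
  have hSA : MeasurableSet {v : Fin R → ℤ | ∀ i, v i = a i} := by
    have : {v : Fin R → ℤ | ∀ i, v i = a i}
        = ⋂ i : Fin R, (fun v : Fin R → ℤ => v i) ⁻¹' {a i} := by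
      ext v; simp
    rw [this]
    exact MeasurableSet.iInter fun i => (measurable_pi_apply i) (measurableSet_singleton _)
  have h1 : (φ ∘ f) ⁻¹' {v | ∀ i, v i = a i} = {ω | ∀ i : Fin R, X (i : ℕ) ω = a i} := rfl
  have hsum : ∀ ω, ψ (g ω) = ∑ i ∈ Finset.Ico R n, X i ω := fun ω =>
    Finset.sum_attach (Finset.Ico R n) (fun i => X i ω)
  have h2 : (ψ ∘ g) ⁻¹' {c} = {ω | ∑ i ∈ Finset.Ico R n, X i ω = c} := by
    ext ω
    simp only [Set.mem_preimage, Function.comp_apply, Set.mem_singleton_iff, Set.mem_setOf_eq,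
      hsum ω]
  have := hcomp.measure_inter_preimage_eq_mul {v | ∀ i, v i = a i} {c} hSA
    (measurableSet_singleton c)
  rw [h1, h2] at this
  rw [this]
  congr 1
  rw [meas_sum_eq μ X hmeas hindep hlaw (Finset.Ico R n) c, Nat.card_Ico]

end Meas

lemma lin_tendsto (a b : ℝ) : Tendsto (fun x : ℝ => (x + a) / (x + b)) atTop (nhds 1) := by
  have h0 : Tendsto (fun x : ℝ => 1 + (a - b) / (x + b)) atTop (nhds (1 + 0)) :=
    tendsto_const_nhds.add
      (Tendsto.div_atTop tendsto_const_nhds (tendsto_atTop_add_const_right _ b tendsto_id))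
  rw [add_zero] at h0
  apply h0.congr'
  filter_upwards [eventually_gt_atTop (-b)] with x hx
  have hxb : x + b ≠ 0 := by linarith
  field_simp
  ring

lemma lin_nat (c₁ c₂ : ℝ) :
    Tendsto (fun n : ℕ => (2 * (n : ℝ) + c₁) / (2 * (n : ℝ) + c₂)) atTop (nhds 1) := by
  have h2 : Tendsto (fun n : ℕ => 2 * (n : ℝ)) atTop atTop :=
    Tendsto.const_mul_atTop (by norm_num) tendsto_natCast_atTop_atTop
  exact (lin_tendsto c₁ c₂).comp h2

lemma ratio_tendsto : ∀ s B : ℕ, B ≤ s →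
    Tendsto (fun n : ℕ =>
        (((2 * n - s - 1).choose (n - B) * 2 ^ s : ℕ) : ℝ) / (((2 * n - 1).choose n : ℕ) : ℝ))
      atTop (nhds 1) := by
  intro s
  induction s with
  | zero =>
    intro B hB
    rw [Nat.le_zero] at hB
    subst hB
    apply Tendsto.congr' ?_ (tendsto_const_nhds (x := (1 : ℝ)))
    filter_upwards [eventually_ge_atTop 1] with n hn
    have hpos : 0 < (2 * n - 1).choose n := Nat.choose_pos (by omega)
    have : ((2 * n - 1).choose n : ℝ) ≠ 0 := by positivity
    symm
    simp only [Nat.sub_zero, pow_zero, mul_one]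
    exact div_self this
  | succ s ih =>
    intro B hB
    by_cases hB'' : B ≤ s
    · -- B ≤ s
      have hmul := (ih B hB'').mul (lin_nat (2 * (B : ℝ) - 2 * s - 2) (-(s : ℝ) - 1))
      rw [mul_one] at hmul
      apply hmul.congr'
      filter_upwards [eventually_ge_atTop (s + 2)] with n hn
      set M : ℕ := 2 * n - s - 1 with hM
      set k : ℕ := n - B with hk
      set K : ℕ := M - k with hK
      set D : ℕ := (2 * n - 1).choose n with hD
      have hkM : k + 1 ≤ M := by omega
      have hid : (M - 1).choose k * M = M.choose k * K := by
        have := Nat.choose_mul_succ_eq (M - 1) k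
        rw [show M - 1 + 1 = M from by omega] at this
        rw [show K = M - k from rfl]
        exact this
      have hidR : ((M - 1).choose k : ℝ) * M = (M.choose k : ℝ) * K := by exact_mod_cast hid
      have hDpos : (0 : ℝ) < D := by
        have : 0 < D := Nat.choose_pos (by omega)
        exact_mod_cast this
      have hMR : (M : ℝ) = 2 * (n : ℝ) + (-(s : ℝ) - 1) := by
        have h' : (M : ℤ) = 2 * (n : ℤ) - s - 1 := by omega
        have := congrArg (fun z : ℤ => (z : ℝ)) h'
        push_cast at this
        rw [this]; ring
      have hKR : 2 * (K : ℝ) = 2 * (n : ℝ) + (2 * (B : ℝ) - 2 * s - 2) := by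
        have h' : (K : ℤ) = (n : ℤ) + B - s - 1 := by omega
        have := congrArg (fun z : ℤ => (z : ℝ)) h'
        push_cast at this
        rw [this]; ring
      have hnum : (2 * n - (s + 1) - 1).choose (n - B) = (M - 1).choose k := by
        congr 1 <;> omega
      rw [hnum]
      have hMpos : (0 : ℝ) < (M : ℝ) := by
        have : 0 < M := by omega
        exact_mod_cast this
      rw [← hMR, ← hKR]
      push_cast
      rw [div_mul_div_comm]
      rw [div_eq_div_iff (by positivity) (by positivity)]
      push_cast
      linear_combination (-(2 * 2 ^ s * (D : ℝ))) * hidR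
    · -- B = s + 1
      have hBe : B = s + 1 := by omega
      subst hBe
      have hmul := (ih s le_rfl).mul (lin_nat (-2 * (s : ℝ)) (-(s : ℝ) - 1))
      rw [mul_one] at hmul
      apply hmul.congr'
      filter_upwards [eventually_ge_atTop (s + 2)] with n hn
      set M : ℕ := 2 * n - s - 1 with hM
      set k : ℕ := n - s with hk
      set D : ℕ := (2 * n - 1).choose n with hD
      have hid : M * (M - 1).choose (k - 1) = M.choose k * k := by
        have := Nat.add_one_mul_choose_eq (M - 1) (k - 1)
        rw [show M - 1 + 1 = M from by omega, show k - 1 + 1 = k from by omega] at this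
        exact this
      have hidR : (M : ℝ) * ((M - 1).choose (k - 1) : ℝ) = (M.choose k : ℝ) * k := by
        exact_mod_cast hid
      have hDpos : (0 : ℝ) < D := by
        have : 0 < D := Nat.choose_pos (by omega)
        exact_mod_cast this
      have hMR : (M : ℝ) = 2 * (n : ℝ) + (-(s : ℝ) - 1) := by
        have h' : (M : ℤ) = 2 * (n : ℤ) - s - 1 := by omega
        have := congrArg (fun z : ℤ => (z : ℝ)) h'
        push_cast at this
        rw [this]; ring
      have hkR : 2 * (k : ℝ) = 2 * (n : ℝ) + (-2 * (s : ℝ)) := by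
        have h' : (k : ℤ) = (n : ℤ) - s := by omega
        have := congrArg (fun z : ℤ => (z : ℝ)) h'
        push_cast at this
        rw [this]; ring
      have hnum : (2 * n - (s + 1) - 1).choose (n - (s + 1)) = (M - 1).choose (k - 1) := by
        congr 1 <;> omega
      rw [hnum]
      have hsk : (2 * n - s - 1).choose (n - s) = M.choose k := rfl
      rw [hsk]
      have hMpos : (0 : ℝ) < (M : ℝ) := by
        have : 0 < M := by omega
        exact_mod_cast this
      rw [← hMR, ← hkR]
      push_cast
      rw [div_mul_div_comm]
      rw [div_eq_div_iff (by positivity) (by positivity)]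
      push_cast
      linear_combination (-(2 * 2 ^ s * (D : ℝ))) * hidR

lemma q_ratio (R B n : ℕ) (A : ℤ) (hBA : (B : ℤ) = A + R) (hn : R + B + 2 ≤ n) :
    (q n 0)⁻¹ * q (n - R) (-A)
      = ENNReal.ofReal ((((2 * n - (R + B) - 1).choose (n - B) * 2 ^ (R + B) : ℕ) : ℝ)
          / (((2 * n - 1).choose n : ℕ) : ℝ)) := by
  set S : ℕ := R + B with hS
  set C₁ : ℕ := (2 * n - S - 1).choose (n - B) with hC₁
  set D : ℕ := (2 * n - 1).choose n with hD
  have hDpos : 0 < D := Nat.choose_pos (by omega)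
  have hq1 : q n 0 = (D : ℝ≥0∞) * (2 : ℝ≥0∞)⁻¹ ^ (2 * n) := by
    rw [q, if_pos (by omega : -(n : ℤ) ≤ 0)]
    rw [show (0 + 2 * (n : ℤ) - 1).toNat = 2 * n - 1 from by omega,
        show ((0 : ℤ) + (n : ℤ)).toNat = n from by omega,
        show ((0 : ℤ) + 2 * (n : ℤ)).toNat = 2 * n from by omega]
  have hq2 : q (n - R) (-A) = (C₁ : ℝ≥0∞) * (2 : ℝ≥0∞)⁻¹ ^ (2 * n - S) := by
    rw [q, if_pos (by omega : -(((n - R : ℕ) : ℤ)) ≤ -A)]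
    rw [show (-A + 2 * ((n - R : ℕ) : ℤ) - 1).toNat = 2 * n - S - 1 from by omega,
        show (-A + ((n - R : ℕ) : ℤ)).toNat = n - B from by omega,
        show (-A + 2 * ((n - R : ℕ) : ℤ)).toNat = 2 * n - S from by omega]
  have hD0 : (D : ℝ≥0∞) ≠ 0 := by exact_mod_cast hDpos.ne'
  have hDtop : (D : ℝ≥0∞) ≠ ⊤ := ENNReal.natCast_ne_top D
  have hofReal : ENNReal.ofReal (((C₁ * 2 ^ S : ℕ) : ℝ) / ((D : ℕ) : ℝ))
      = ((C₁ * 2 ^ S : ℕ) : ℝ≥0∞) / (D : ℝ≥0∞) := by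
    rw [ENNReal.ofReal_div_of_pos (by exact_mod_cast hDpos), ENNReal.ofReal_natCast,
      ENNReal.ofReal_natCast]
  rw [hq1, hq2, hofReal]
  rw [ENNReal.eq_div_iff hD0 hDtop]
  have hu : (((2 : ℝ≥0∞)⁻¹ ^ (2 * n)) : ℝ≥0∞)⁻¹ = 2 ^ (2 * n) := by
    rw [← ENNReal.inv_pow, inv_inv]
  have hpow : (2 : ℝ≥0∞) ^ (2 * n) * (2 : ℝ≥0∞)⁻¹ ^ (2 * n - S) = 2 ^ S := by
    have h1 : (2 : ℝ≥0∞) ^ (2 * n) = 2 ^ S * 2 ^ (2 * n - S) := by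
      rw [← pow_add]; congr 1; omega
    rw [h1, mul_assoc, ← mul_pow, ENNReal.mul_inv_cancel (by norm_num) (by norm_num),
      one_pow, mul_one]
  have hDinv : (D : ℝ≥0∞) * ((D : ℝ≥0∞) * (2 : ℝ≥0∞)⁻¹ ^ (2 * n))⁻¹
      = ((2 : ℝ≥0∞)⁻¹ ^ (2 * n))⁻¹ := by
    rw [ENNReal.mul_inv (Or.inl hD0) (Or.inl hDtop), ← mul_assoc,
      ENNReal.mul_inv_cancel hD0 hDtop, one_mul]
  calc (D : ℝ≥0∞) * (((D : ℝ≥0∞) * (2 : ℝ≥0∞)⁻¹ ^ (2 * n))⁻¹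
          * ((C₁ : ℝ≥0∞) * (2 : ℝ≥0∞)⁻¹ ^ (2 * n - S)))
      = ((D : ℝ≥0∞) * ((D : ℝ≥0∞) * (2 : ℝ≥0∞)⁻¹ ^ (2 * n))⁻¹)
          * ((C₁ : ℝ≥0∞) * (2 : ℝ≥0∞)⁻¹ ^ (2 * n - S)) := by rw [mul_assoc]
    _ = ((2 : ℝ≥0∞)⁻¹ ^ (2 * n))⁻¹ * ((C₁ : ℝ≥0∞) * (2 : ℝ≥0∞)⁻¹ ^ (2 * n - S)) := by
        rw [hDinv]
    _ = (C₁ : ℝ≥0∞) * ((2 : ℝ≥0∞) ^ (2 * n) * (2 : ℝ≥0∞)⁻¹ ^ (2 * n - S)) := by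
        rw [hu, ← mul_assoc, mul_comm ((2 : ℝ≥0∞) ^ (2 * n)) ((C₁ : ℝ≥0∞)), mul_assoc]
    _ = (C₁ : ℝ≥0∞) * 2 ^ S := by rw [hpow]
    _ = ((C₁ * 2 ^ S : ℕ) : ℝ≥0∞) := by push_cast; ring

end BridgeAux

/-- Let `X_1, X_2, ...` be i.i.d. with `P(X_j = k) = 2^{-k-2}` for integers `k ≥ -1`.
For every fixed `R ≥ 1` and all `a_1,...,a_R ∈ {-1,0,1,...}`, the conditional probability
`P(X_1 = a_1, ..., X_R = a_R | X_1 + ... + X_n = 0)` converges, as `n → ∞`, to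
`P(X_1 = a_1, ..., X_R = a_R)`. -/
theorem bridge_conditioned_convergence
    {Ω : Type*} [MeasurableSpace Ω] (μ : Measure Ω) [IsProbabilityMeasure μ]
    (X : ℕ → Ω → ℤ)
    (hmeas : ∀ i, Measurable (X i))
    (hindep : iIndepFun X μ)
    (hlaw : ∀ i, ∀ k : ℤ,
      μ {ω | X i ω = k} = if -1 ≤ k then (2 : ℝ≥0∞)⁻¹ ^ (k + 2).toNat else 0)
    (R : ℕ) (hR : 1 ≤ R) (a : Fin R → ℤ) (ha : ∀ i, -1 ≤ a i) :
    Tendsto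
      (fun n => (μ[|{ω | ∑ i ∈ Finset.range n, X i ω = 0}])
        {ω | ∀ i : Fin R, X (i : ℕ) ω = a i})
      atTop (nhds (μ {ω | ∀ i : Fin R, X (i : ℕ) ω = a i})) := by
    classical
  have hlaw' : ∀ i, ∀ k : ℤ, μ {ω | X i ω = k} = BridgeAux.p k := hlaw
  set E : Set Ω := {ω | ∀ i : Fin R, X (i : ℕ) ω = a i} with hE
  set A : ℤ := ∑ i, a i with hA
  have hAR : -(R : ℤ) ≤ A := by
    have h := Finset.sum_le_sum (s := (Finset.univ : Finset (Fin R))) (f := fun _ : Fin R => (-1 : ℤ)) (g := a)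
      (fun i _ => ha i)
    simp only [Finset.sum_const, Finset.card_univ, Fintype.card_fin, nsmul_eq_mul, smul_eq_mul,
      mul_neg, mul_one] at h
    omega
  set B : ℕ := (A + R).toNat with hB
  have hBA : (B : ℤ) = A + R := Int.toNat_of_nonneg (by omega)
  set S : ℕ := R + B with hS
  have hratio := BridgeAux.ratio_tendsto S B (by omega)
  have htransfer : Tendsto (fun n : ℕ => ENNReal.ofReal
      ((((2 * n - S - 1).choose (n - B) * 2 ^ S : ℕ) : ℝ)
        / (((2 * n - 1).choose n : ℕ) : ℝ))) atTop (nhds 1) := by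
    have h := ENNReal.tendsto_ofReal hratio
    rwa [ENNReal.ofReal_one] at h
  have hfinal := ENNReal.Tendsto.const_mul (a := μ E) htransfer (Or.inl one_ne_zero)
  rw [mul_one] at hfinal
  apply hfinal.congr'
  filter_upwards [eventually_ge_atTop (S + 2)] with n hn
  have hRn : R ≤ n := by omega
  have hBmeas : MeasurableSet {ω | ∑ i ∈ Finset.range n, X i ω = 0} :=
    (Finset.measurable_sum (Finset.range n) fun i _ => hmeas i) (measurableSet_singleton 0)
  rw [ProbabilityTheory.cond_apply hBmeas]
  have hsplit : {ω | ∑ i ∈ Finset.range n, X i ω = 0} ∩ E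
      = {ω | ∀ i : Fin R, X (i : ℕ) ω = a i} ∩ {ω | ∑ i ∈ Finset.Ico R n, X i ω = -A} := by
    ext ω
    simp only [Set.mem_inter_iff, Set.mem_setOf_eq, hE]
    have h2 : ∑ i ∈ Finset.range R, X i ω + ∑ i ∈ Finset.Ico R n, X i ω
        = ∑ i ∈ Finset.range n, X i ω := by
      rw [Finset.range_eq_Ico, Finset.range_eq_Ico]
      exact Finset.sum_Ico_consecutive _ (Nat.zero_le R) hRn
    constructor
    · rintro ⟨hsum, hall⟩
      refine ⟨hall, ?_⟩
      have h1 : ∑ i ∈ Finset.range R, X i ω = A := by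
        rw [← Fin.sum_univ_eq_sum_range (fun i => X i ω) R]
        exact Finset.sum_congr rfl fun i _ => hall i
      omega
    · rintro ⟨hall, hsum⟩
      refine ⟨?_, hall⟩
      have h1 : ∑ i ∈ Finset.range R, X i ω = A := by
        rw [← Fin.sum_univ_eq_sum_range (fun i => X i ω) R]
        exact Finset.sum_congr rfl fun i _ => hall i
      omega
  rw [hsplit, BridgeAux.meas_prefix μ X hmeas hindep hlaw' R n hRn a (-A),
    BridgeAux.meas_sum_eq μ X hmeas hindep hlaw' (Finset.range n) 0, Finset.card_range]
  have hq := BridgeAux.q_ratio R B n A hBA (by omega)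
  rw [mul_left_comm ((BridgeAux.q n 0)⁻¹) (μ E) (BridgeAux.q (n - R) (-A)), hq]
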